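/- Let n ≥ 1, let λ_1,…,λ_n be positive real numbers, and let b_1,…,b_n and c_1,…,c_n be differentiable real-valued functions on ℝ such that for all t and all k: b_k'(t) = b_k(t)/λ_k, c_k'(t) = b_k(t)·∑_{i=1}^n b_i'(t), and c_k(0) = ∑_{i=1}^n λ_k·b_k(0)·b_i(0)/(λ_i+λ_k). Then for all t and all k: b_k(t) = b_k(0)·e^{t/λ_k} and c_k(t) = ∑_{i=1}^n λ_k·b_k(t)·b_i(t)/(λ_i+λ_k). -/

import Mathlib

theorem bc_time_evolution (n : ℕ) (hn : 1 ≤ n) (lam : Fin n → ℝ)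
    (hlam : ∀ k, 0 < lam k)
    (b c : Fin n → ℝ → ℝ)
    (hbdiff : ∀ k, Differentiable ℝ (b k))
    (hcdiff : ∀ k, Differentiable ℝ (c k))
    (hb' : ∀ t, ∀ k, deriv (b k) t = b k t / lam k)
    (hc' : ∀ t, ∀ k, deriv (c k) t = b k t * ∑ i, deriv (b i) t)
    (hc0 : ∀ k, c k 0 = ∑ i, lam k * b k 0 * b i 0 / (lam i + lam k)) :
    ∀ t : ℝ, ∀ k,
      b k t = b k 0 * Real.exp (t / lam k) ∧
      c k t = ∑ i, lam k * b k t * b i t / (lam i + lam k) := by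
  have hlamne : ∀ k, lam k ≠ 0 := fun k => (hlam k).ne'
  have hsumne : ∀ i k : Fin n, lam i + lam k ≠ 0 := fun i k => by
    have := hlam i; have := hlam k; positivity
  have hbH : ∀ k t, HasDerivAt (b k) (b k t / lam k) t := fun k t => by
    have h := (hbdiff k t).hasDerivAt
    rwa [hb' t k] at h
  intro t k
  constructor
  · -- b part
    set g : ℝ → ℝ := fun s => b k s * Real.exp (-(s / lam k)) with hg
    have hgd : ∀ s, HasDerivAt g 0 s := by
      intro s
      have h1 : HasDerivAt (fun s : ℝ => -(s / lam k)) (-(1 / lam k)) s := by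
        simpa using ((hasDerivAt_id s).div_const (lam k)).fun_neg
      have he := h1.exp
      have hmul := (hbH k s).fun_mul he
      have h0 : b k s / lam k * Real.exp (-(s / lam k)) + b k s * (Real.exp (-(s / lam k)) * -(1 / lam k)) = 0 := by ring
      rw [h0] at hmul
      exact hmul
    have hconst : ∀ x y : ℝ, g x = g y :=
      is_const_of_deriv_eq_zero (fun x => (hgd x).differentiableAt)
        (fun x => (hgd x).deriv)
    have h3 : b k t * Real.exp (-(t / lam k)) = b k 0 := by
      have := hconst t 0
      simpa [hg] using this
    have hexp := Real.exp_ne_zero (-(t / lam k))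
    rw [show t / lam k = -(-(t / lam k)) by ring, Real.exp_neg]
    field_simp
    exact h3
  · -- c part
    set F : ℝ → ℝ := fun s => c k s - ∑ i, lam k * b k s * b i s / (lam i + lam k)
      with hF
    have hFd : ∀ s, HasDerivAt F 0 s := by
      intro s
      have hcH : HasDerivAt (c k) (∑ i, b k s * (b i s / lam i)) s := by
        have h := (hcdiff k s).hasDerivAt
        rw [hc' s k] at h
        have : b k s * ∑ i, deriv (b i) s = ∑ i, b k s * (b i s / lam i) := by
          rw [Finset.mul_sum]
          exact Finset.sum_congr rfl fun i _ => by rw [hb' s i]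
        rwa [this] at h
      have hsH : HasDerivAt (fun s => ∑ i, lam k * b k s * b i s / (lam i + lam k))
          (∑ i, (lam k * (b k s / lam k) * b i s + lam k * b k s * (b i s / lam i))
            / (lam i + lam k)) s := by
        apply HasDerivAt.fun_sum
        intro i _
        exact ((((hbH k s).const_mul (lam k)).mul (hbH i s)).div_const _)
      have heq : ∑ i, (lam k * (b k s / lam k) * b i s + lam k * b k s * (b i s / lam i))
            / (lam i + lam k) = ∑ i, b k s * (b i s / lam i) := by
        refine Finset.sum_congr rfl fun i _ => ?_
        have h1 := hlamne i; have h2 := hlamne k; have h3 := hsumne i k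
        field_simp
      rw [heq] at hsH
      simpa using hcH.fun_sub hsH
    have hconst : ∀ x y : ℝ, F x = F y :=
      is_const_of_deriv_eq_zero (fun x => (hFd x).differentiableAt)
        (fun x => (hFd x).deriv)
    have hF0 : F 0 = 0 := by simp [hF, hc0 k]
    have := hconst t 0
    rw [hF0] at this
    have : c k t - ∑ i, lam k * b k t * b i t / (lam i + lam k) = 0 := this
    linarith [this]
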